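/- Let μ = (μ_1,...,μ_r) be a partition of n and for 0 ≤ i ≤ n define b_i(μ;t) as the coefficient of v^i in ∏_{j=1}^r (t^{-1} + v^{μ_j} + (1 - t^{-1})(1 + v + ... + v^{μ_j - 1})). Then b_i(μ;t) = (1-t^{-1})^{-r} · Σ_τ (1-t^{-1})^{l(μ-τ)+l(τ)}, where τ ranges over compositions with 0 ≤ τ_j ≤ μ_j and Σ_j τ_j = i. -/

import Mathlib

open Finset Polynomial

noncomputable section

/-- The indeterminate `t` of `ℚ(t)`. -/
def tq : RatFunc ℚ := RatFunc.X

lemma a_ne : (1 - tq⁻¹ : RatFunc ℚ) ≠ 0 := by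
  rw [sub_ne_zero]
  intro h
  have h2 : tq = 1 := by rwa [eq_comm, inv_eq_one] at h
  have h3 : (Polynomial.X : Polynomial ℚ) = 1 := by
    apply RatFunc.algebraMap_injective ℚ
    simpa [RatFunc.algebraMap_X, tq] using h2
  simpa [Polynomial.coeff_one] using congrArg (fun p => Polynomial.coeff p 1) h3

lemma factor_eq (m : ℕ) (hm : 0 < m) :
    (Polynomial.C tq⁻¹ + (Polynomial.X : Polynomial (RatFunc ℚ)) ^ m +
      Polynomial.C (1 - tq⁻¹) * ∑ k ∈ Finset.range m, Polynomial.X ^ k)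
    = Polynomial.C (1 - tq⁻¹)⁻¹ *
      ∑ k ∈ Finset.range (m + 1),
        Polynomial.C ((1 - tq⁻¹) ^ ((if k < m then 1 else 0) + (if k ≠ 0 then 1 else 0))) *
          Polynomial.X ^ k := by
  have h0 : (1 - tq⁻¹ : RatFunc ℚ) ≠ 0 := a_ne
  set a := (1 - tq⁻¹ : RatFunc ℚ) with ha
  rw [Finset.sum_range_succ]
  have hmm : ((if m < m then 1 else 0) + (if m ≠ 0 then 1 else 0)) = 1 := by
    simp [hm.ne']
  rw [hmm, pow_one]
  have hsplit : (∑ k ∈ Finset.range m,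
      Polynomial.C (a ^ ((if k < m then 1 else 0) + (if k ≠ 0 then 1 else 0))) *
        Polynomial.X ^ k)
      = Polynomial.C (a ^ 2) * (∑ k ∈ Finset.range m, Polynomial.X ^ k)
        + (Polynomial.C a - Polynomial.C (a ^ 2)) := by
    rw [Finset.mul_sum]
    have step : ∀ k ∈ Finset.range m,
        Polynomial.C (a ^ ((if k < m then 1 else 0) + (if k ≠ 0 then 1 else 0))) *
          Polynomial.X ^ k
        = Polynomial.C (a ^ 2) * Polynomial.X ^ k
          + (if k = 0 then Polynomial.C a - Polynomial.C (a ^ 2) else 0) := by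
      intro k hk
      rw [Finset.mem_range] at hk
      by_cases h : k = 0
      · subst h
        simp only [hm, if_pos, if_neg (by simp : ¬ (0 : ℕ) ≠ 0), add_zero, pow_one,
          pow_zero, mul_one, if_pos rfl]
        ring
      · simp [hk, h]
    rw [Finset.sum_congr rfl step, Finset.sum_add_distrib, Finset.sum_ite_eq' (Finset.range m)]
    simp [hm]
  rw [hsplit]
  have key : ∀ b : RatFunc ℚ, Polynomial.C a⁻¹ * Polynomial.C b = Polynomial.C (a⁻¹ * b) :=
    fun b => (map_mul Polynomial.C a⁻¹ b).symm
  rw [mul_add, mul_add, ← mul_assoc, key, mul_sub, key, key, ← mul_assoc, key]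
  have e1 : a⁻¹ * a ^ 2 = a := by field_simp
  have e2 : a⁻¹ * a = 1 := inv_mul_cancel₀ h0
  have e3 : Polynomial.C tq⁻¹ = 1 - Polynomial.C a := by
    rw [← Polynomial.C_1, ← Polynomial.C_sub]
    congr 1
    rw [ha]; ring
  rw [e1, e2, Polynomial.C_1, one_mul, e3]
  ring

/-- for a partition `μ = (μ_1,…,μ_r)` of `n`, the coefficient of `v^i` in
`∏_j (t⁻¹ + v^{μ_j} + (1 - t⁻¹)[μ_j]_v)` equals
`(1-t⁻¹)^{-r} ∑_{τ ⊆ μ, |τ| = i} (1-t⁻¹)^{l(μ-τ)+l(τ)}`. -/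
theorem bCoeff_eq_sum (n r : ℕ) (μ : Fin r → ℕ) (hpos : ∀ j, 0 < μ j)
    (hanti : Antitone μ) (hsum : ∑ j, μ j = n) (i : ℕ) (hi : i ≤ n) :
    Polynomial.coeff
        (∏ j, (Polynomial.C tq⁻¹ + (Polynomial.X : Polynomial (RatFunc ℚ)) ^ (μ j) +
          Polynomial.C (1 - tq⁻¹) * ∑ k ∈ Finset.range (μ j), Polynomial.X ^ k)) i
      = ((1 - tq⁻¹)⁻¹) ^ r *
          ∑ τ ∈ (Fintype.piFinset fun j => Finset.range (μ j + 1)).filter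
              (fun τ => ∑ j, τ j = i),
            (1 - tq⁻¹) ^
              ((Finset.univ.filter fun j => τ j < μ j).card +
                (Finset.univ.filter fun j => τ j ≠ 0).card) := by
  set a := (1 - tq⁻¹ : RatFunc ℚ) with ha
  conv_lhs => rw [Finset.prod_congr rfl (fun j _ => factor_eq (μ j) (hpos j))]
  rw [Finset.prod_mul_distrib, Finset.prod_const, ← Polynomial.C_pow,
    Finset.prod_univ_sum, Polynomial.coeff_C_mul, Finset.card_univ, Fintype.card_fin]
  congr 1
  have hterm : ∀ τ : Fin r → ℕ,
      (∏ j, Polynomial.C (a ^ ((if τ j < μ j then 1 else 0) + (if τ j ≠ 0 then 1 else 0))) *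
        Polynomial.X ^ (τ j))
      = Polynomial.C (a ^ (∑ j, ((if τ j < μ j then 1 else 0) + (if τ j ≠ 0 then 1 else 0)))) *
        Polynomial.X ^ (∑ j, τ j) := by
    intro τ
    rw [Finset.prod_mul_distrib, ← map_prod, Finset.prod_pow_eq_pow_sum,
      Finset.prod_pow_eq_pow_sum]
  rw [Finset.sum_congr rfl (fun τ _ => hterm τ), Polynomial.finset_sum_coeff]
  simp only [Polynomial.coeff_C_mul, Polynomial.coeff_X_pow]
  rw [Finset.sum_filter]
  apply Finset.sum_congr rfl
  intro τ _
  have hc : (∑ j, ((if τ j < μ j then 1 else 0) + (if τ j ≠ 0 then 1 else 0)))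
      = (Finset.univ.filter fun j => τ j < μ j).card +
        (Finset.univ.filter fun j => τ j ≠ 0).card := by
    rw [Finset.sum_add_distrib, Finset.card_filter, Finset.card_filter]
  rw [hc]
  by_cases h : (∑ j, τ j) = i
  · simp [h]
  · simp [h, Ne.symm h]


end
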